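/- arXiv:2302.11964 — 11 statements merged into one kernel-verified Lean document; each statement's English description precedes it below -/
import Mathlib

section
/- For real R > 1 and integers n ≥ 3, k ≥ 0, the quantity σ_D(k,R) := ((k+n-2)·R^(2k+n-2) + k)/(R^(2k+n-2) - 1) is strictly decreasing as a function of R on (1,∞). -/
theorem stmt_0 (n k : ℕ) (hn : 3 ≤ n) :
    StrictAntiOn (fun R : ℝ =>
      (((k : ℝ) + n - 2) * R ^ (2 * k + n - 2) + k) / (R ^ (2 * k + n - 2) - 1))
      (Set.Ioi (1 : ℝ)) := by
  intro R1 h1 R2 h2 h12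
  simp only [Set.mem_Ioi] at h1 h2
  have hm : 2 * k + n - 2 ≠ 0 := by omega
  set m := 2 * k + n - 2 with hmdef
  have hx : (1 : ℝ) < R1 ^ m := one_lt_pow₀ h1 hm
  have hxy : R1 ^ m < R2 ^ m :=
    pow_lt_pow_left₀ h12 (by linarith) hm
  set x := R1 ^ m
  set y := R2 ^ m
  have hx1 : (0 : ℝ) < x - 1 := by linarith
  have hy1 : (0 : ℝ) < y - 1 := by linarith
  have hn3 : (3 : ℝ) ≤ (n : ℝ) := by exact_mod_cast hn
  have hk : (0 : ℝ) ≤ (k : ℝ) := Nat.cast_nonneg k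
  simp only
  rw [div_lt_div_iff₀ hy1 hx1]
  nlinarith [mul_pos hx1 hy1, mul_lt_mul_of_pos_left hxy (show (0:ℝ) < (k:ℝ) + n - 2 + k by linarith)]
end

section
/- For each integer n ≥ 3, the polynomial equation R^(2n-2) - (n-1)·R^n - (n-1)^2·R^(n-2) + (n-1) = 0 has exactly one real solution R with R > 1. -/
private noncomputable def Pfun (n : ℕ) (R : ℝ) : ℝ :=
  R ^ (2 * n - 2) - ((n : ℝ) - 1) * R ^ n - ((n : ℝ) - 1) ^ 2 * R ^ (n - 2) + ((n : ℝ) - 1)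

private noncomputable def gfun (n : ℕ) (R : ℝ) : ℝ :=
  (n : ℝ) * ((n : ℝ) - 1) / (R ^ n + (n : ℝ) - 1) + ((n : ℝ) - 2) / (R ^ (n - 2) - 1)

private lemma aux_pos (n : ℕ) (hn : 3 ≤ n) {R : ℝ} (hR : 1 < R) :
    0 < R ^ n + (n : ℝ) - 1 ∧ 0 < R ^ (n - 2) - 1 := by
  have hk : (3 : ℝ) ≤ (n : ℝ) := by exact_mod_cast hn
  have h1 : (1 : ℝ) < R ^ n := one_lt_pow₀ hR (by omega)
  have h2 : (1 : ℝ) < R ^ (n - 2) := one_lt_pow₀ hR (by omega)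
  constructor <;> nlinarith

private lemma key (n : ℕ) (hn : 3 ≤ n) {R : ℝ} (hR : 1 < R) :
    Pfun n R = 0 ↔ gfun n R = 1 := by
  obtain ⟨h1, h2⟩ := aux_pos n hn hR
  have hsplit : 2 * n - 2 = n + (n - 2) := by omega
  have hid : Pfun n R = (R ^ n + (n : ℝ) - 1) * (R ^ (n - 2) - 1) * (1 - gfun n R) := by
    unfold Pfun gfun
    rw [hsplit, pow_add]
    field_simp
    ring
  rw [hid]
  constructor
  · intro h
    rcases mul_eq_zero.mp h with h | h
    · rcases mul_eq_zero.mp h with h | h <;> nlinarith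
    · linarith [sub_eq_zero.mp h]
  · intro h
    rw [h]; ring

private lemma ganti (n : ℕ) (hn : 3 ≤ n) {x y : ℝ} (hx : 1 < x) (hxy : x < y) :
    gfun n y < gfun n x := by
  have hk : (3 : ℝ) ≤ (n : ℝ) := by exact_mod_cast hn
  obtain ⟨hx1, hx2⟩ := aux_pos n hn hx
  have hy : 1 < y := hx.trans hxy
  have hp1 : x ^ n < y ^ n := pow_lt_pow_left₀ hxy (by linarith) (by omega)
  have hp2 : x ^ (n - 2) < y ^ (n - 2) := pow_lt_pow_left₀ hxy (by linarith) (by omega)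
  unfold gfun
  have t1 : (n : ℝ) * ((n : ℝ) - 1) / (y ^ n + (n : ℝ) - 1)
      < (n : ℝ) * ((n : ℝ) - 1) / (x ^ n + (n : ℝ) - 1) := by
    apply div_lt_div_of_pos_left (by nlinarith) hx1 (by linarith)
  have t2 : ((n : ℝ) - 2) / (y ^ (n - 2) - 1) < ((n : ℝ) - 2) / (x ^ (n - 2) - 1) := by
    apply div_lt_div_of_pos_left (by linarith) hx2 (by linarith)
  linarith

theorem stmt_4 (n : ℕ) (hn : 3 ≤ n) :
    ∃! R : ℝ, 1 < R ∧
      R ^ (2 * n - 2) - ((n : ℝ) - 1) * R ^ n - ((n : ℝ) - 1) ^ 2 * R ^ (n - 2)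
        + ((n : ℝ) - 1) = 0 := by
  have hk : (3 : ℝ) ≤ (n : ℝ) := by exact_mod_cast hn
  have hcont : Continuous (Pfun n) := by unfold Pfun; fun_prop
  -- value at b = 2(n-1) is positive
  set b : ℝ := 2 * ((n : ℝ) - 1) with hb
  have hb1 : (1 : ℝ) < b := by simp only [hb]; linarith
  have hPb : 0 < Pfun n b := by
    have hsplit : 2 * n - 2 = n + (n - 2) := by omega
    have h1 : b ≤ b ^ (n - 2) := le_self_pow₀ (by linarith) (by omega)
    have h2 : b ^ 2 ≤ b ^ n := pow_le_pow_right₀ (by linarith) (by omega)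
    have h3 : (0:ℝ) < b ^ n := by positivity
    have h4 : (0:ℝ) < b ^ (n - 2) := by positivity
    have h5 : 2 * ((n : ℝ) - 1) * b ^ n ≤ b ^ (n - 2) * b ^ n := by
      apply mul_le_mul_of_nonneg_right _ h3.le
      simpa [hb] using h1
    have h6 : 4 * ((n : ℝ) - 1) ^ 2 * b ^ (n - 2) ≤ b ^ n * b ^ (n - 2) := by
      apply mul_le_mul_of_nonneg_right _ h4.le
      calc 4 * ((n : ℝ) - 1) ^ 2 = b ^ 2 := by rw [hb]; ring
        _ ≤ b ^ n := h2
    unfold Pfun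
    rw [hsplit, pow_add]
    nlinarith [h4, hk, h5, h6]
  -- find a near 1 with Pfun n a < 0
  have hP1 : Pfun n 1 < 0 := by unfold Pfun; simp; nlinarith
  have hev : ∀ᶠ x in nhdsWithin (1:ℝ) (Set.Ioi 1), Pfun n x < 0 ∧ x < b := by
    have e1 : ∀ᶠ x in nhdsWithin (1:ℝ) (Set.Ioi 1), Pfun n x < 0 := by
      apply Filter.Eventually.filter_mono nhdsWithin_le_nhds
      exact hcont.continuousAt.eventually_lt continuousAt_const hP1
    have e2 : ∀ᶠ x in nhdsWithin (1:ℝ) (Set.Ioi 1), x < b := by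
      apply Filter.Eventually.filter_mono nhdsWithin_le_nhds
      exact Filter.Tendsto.eventually_lt_const hb1 Filter.tendsto_id
    exact e1.and e2
  obtain ⟨a, ⟨hPa, hab⟩, ha1⟩ := (hev.and eventually_mem_nhdsWithin).exists
  have ha1 : (1:ℝ) < a := ha1
  obtain ⟨c, hc, hPc⟩ := intermediate_value_Icc hab.le hcont.continuousOn
    (Set.mem_Icc.mpr ⟨hPa.le, hPb.le⟩)
  have hc1 : 1 < c := lt_of_lt_of_le ha1 hc.1
  refine ⟨c, ⟨hc1, hPc⟩, ?_⟩
  intro y ⟨hy1, hPy⟩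
  have hgy : gfun n y = 1 := (key n hn hy1).mp hPy
  have hgc : gfun n c = 1 := (key n hn hc1).mp hPc
  rcases lt_trichotomy y c with h | h | h
  · exfalso; have := ganti n hn hy1 h; rw [hgy, hgc] at this; exact lt_irrefl _ this
  · exact h
  · exfalso; have := ganti n hn hc1 h; rw [hgy, hgc] at this; exact lt_irrefl _ this
end

section
/- For each integer n ≥ 3, if R_1(n) > 1 is the unique real solution in (1,∞) of R^(2n-2) - (n-1)·R^n - (n-1)^2·R^(n-2) + (n-1) = 0, then R_1(n) < exp(3·log(n-1)/(n-2)). -/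
theorem stmt_5 (n : ℕ) (hn : 3 ≤ n) (R₁ : ℝ) (hR : 1 < R₁)
    (heq : R₁ ^ (2 * n - 2) - ((n : ℝ) - 1) * R₁ ^ n
      - ((n : ℝ) - 1) ^ 2 * R₁ ^ (n - 2) + ((n : ℝ) - 1) = 0) :
    R₁ < Real.exp (3 * Real.log ((n : ℝ) - 1) / ((n : ℝ) - 2)) := by
  have hR0 : (0:ℝ) < R₁ := by linarith
  set a : ℝ := (n:ℝ) - 1 with ha
  have hn3 : (3:ℝ) ≤ (n:ℝ) := by exact_mod_cast hn
  have ha2 : (2:ℝ) ≤ a := by rw [ha]; linarith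
  have key : R₁ ^ (n-2) < a ^ 3 := by
    have e1 : R₁ ^ (2*n-2) = (R₁^2 * R₁^(n-2)) * R₁^(n-2) := by
      rw [← pow_add, ← pow_add]; congr 1; omega
    have e2 : R₁ ^ n = R₁^2 * R₁^(n-2) := by
      rw [← pow_add]; congr 1; omega
    have hp : (0:ℝ) < R₁^(n-2) := pow_pos hR0 _
    have heq' := heq
    rw [e1, e2] at heq'
    have h1 : R₁^2 * R₁^(n-2) < a * R₁^2 + a^2 := by
      nlinarith [hp, mul_pos hp hp]
    have hR2 : (1:ℝ) < R₁^2 := one_lt_pow₀ hR (by norm_num)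
    have h2 : R₁^(n-2) < a + a^2 := by
      by_contra hcon
      push_neg at hcon
      have hmul : (a + a^2) * R₁^2 ≤ R₁^(n-2) * R₁^2 :=
        mul_le_mul_of_nonneg_right hcon (sq_nonneg _)
      nlinarith [hmul, h1, hR2, sq_nonneg a, ha2]
    nlinarith [h2, ha2, sq_nonneg (a-1), sq_nonneg (a-2)]
  have hpos : (0:ℝ) < (n:ℝ) - 2 := by linarith
  have hlogkey : ((n:ℝ)-2) * Real.log R₁ < 3 * Real.log a := by
    have h := Real.log_lt_log (pow_pos hR0 (n-2)) key
    rw [Real.log_pow, Real.log_pow] at h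
    have hc : ((n - 2 : ℕ) : ℝ) = (n:ℝ) - 2 := by
      push_cast [Nat.cast_sub (by omega : 2 ≤ n)]; ring
    rw [hc] at h
    exact_mod_cast h
  have hlog : Real.log R₁ < 3 * Real.log a / ((n:ℝ)-2) :=
    (lt_div_iff₀ hpos).mpr (by linarith)
  calc R₁ = Real.exp (Real.log R₁) := (Real.exp_log hR0).symm
    _ < _ := Real.exp_lt_exp.mpr hlog
end

section
/- For each integer n ≥ 3, if R_1(n) > 1 solves R^(2n-2) - (n-1)·R^n - (n-1)^2·R^(n-2) + (n-1) = 0, then R_1(n) → 1 as n → ∞; equivalently, the critical length L_1(n) = 2(R_1(n) - 1) tends to 0. -/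
open Filter Real

lemma aux_log_lim :
    Tendsto (fun n : ℕ => 2 * Real.log n / ((n : ℝ) - 2)) atTop (nhds 0) := by
  have h1 : Tendsto (fun x : ℝ => Real.log x / x) atTop (nhds 0) :=
    Real.isLittleO_log_id_atTop.tendsto_div_nhds_zero
  have h2 : Tendsto (fun n : ℕ => Real.log n / n) atTop (nhds 0) :=
    h1.comp tendsto_natCast_atTop_atTop
  have h3 : Tendsto (fun n : ℕ => (n : ℝ) / ((n : ℝ) + (-2))) atTop (nhds 1) :=
    tendsto_natCast_div_add_atTop (-2 : ℝ)
  have h4 : Tendsto (fun n : ℕ => 2 * (Real.log n / n) * ((n : ℝ) / ((n : ℝ) + (-2))))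
      atTop (nhds 0) := by
    have := ((h2.const_mul 2).mul h3)
    simpa using this
  refine h4.congr' ?_
  filter_upwards [eventually_ge_atTop 3] with n hn
  have hn0 : (0 : ℝ) < (n : ℝ) := by positivity
  have hn2 : (n : ℝ) + (-2) ≠ 0 := by
    have : (3 : ℝ) ≤ (n : ℝ) := by exact_mod_cast hn
    linarith
  have hn0' : (n : ℝ) ≠ 0 := ne_of_gt hn0
  have hn2' : (n : ℝ) - 2 ≠ 0 := by
    have : (3 : ℝ) ≤ (n : ℝ) := by exact_mod_cast hn
    linarith
  field_simp
  tauto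

theorem stmt_6 (R : ℕ → ℝ)
    (hR : ∀ n : ℕ, 3 ≤ n → 1 < R n ∧
      (R n) ^ (2 * n - 2) - ((n : ℝ) - 1) * (R n) ^ n
        - ((n : ℝ) - 1) ^ 2 * (R n) ^ (n - 2) + ((n : ℝ) - 1) = 0) :
    Filter.Tendsto R Filter.atTop (nhds 1) ∧
      Filter.Tendsto (fun n => 2 * (R n - 1)) Filter.atTop (nhds 0) := by
  have key : ∀ n : ℕ, 3 ≤ n → R n ≤ Real.exp (2 * Real.log n / ((n : ℝ) - 2)) := by
    intro n hn
    obtain ⟨hr1, heq⟩ := hR n hn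
    set r := R n with hrdef
    have hr0 : (0 : ℝ) < r := lt_trans zero_lt_one hr1
    have hnr : (3 : ℝ) ≤ (n : ℝ) := by exact_mod_cast hn
    -- r^(n-2) ≤ n^2
    have e : r ^ (n - 2) * r ^ n
        = ((n : ℝ) - 1) * r ^ n + ((n : ℝ) - 1) ^ 2 * r ^ (n - 2) - ((n : ℝ) - 1) := by
      rw [← pow_add, show n - 2 + n = 2 * n - 2 by omega]
      linarith [heq]
    have hrle : r ^ (n - 2) ≤ r ^ n := pow_le_pow_right₀ hr1.le (by omega)
    have hrn1 : (1 : ℝ) ≤ r ^ n := one_le_pow₀ hr1.le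
    have hmul : ((n : ℝ) - 1) ^ 2 * r ^ (n - 2) ≤ ((n : ℝ) - 1) ^ 2 * r ^ n :=
      mul_le_mul_of_nonneg_left hrle (sq_nonneg _)
    have key2 : r ^ (n - 2) * r ^ n ≤ (n : ℝ) ^ 2 * r ^ n := by nlinarith
    have hpow : r ^ (n - 2) ≤ (n : ℝ) ^ 2 :=
      le_of_mul_le_mul_right key2 (pow_pos hr0 n)
    -- take logs
    have hlog : ((n : ℝ) - 2) * Real.log r ≤ 2 * Real.log n := by
      have h := Real.log_le_log (pow_pos hr0 (n - 2)) hpow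
      rw [Real.log_pow, Real.log_pow] at h
      have hcast : ((n - 2 : ℕ) : ℝ) = (n : ℝ) - 2 := by
        push_cast [Nat.cast_sub (by omega : 2 ≤ n)]; ring
      rw [hcast] at h
      simpa using h
    have hn2 : (0 : ℝ) < (n : ℝ) - 2 := by linarith
    have : Real.log r ≤ 2 * Real.log n / ((n : ℝ) - 2) :=
      (le_div_iff₀ hn2).2 (by linarith [hlog])
    calc r = Real.exp (Real.log r) := (Real.exp_log hr0).symm
      _ ≤ _ := Real.exp_le_exp.2 this
  have hup : Tendsto (fun n : ℕ => Real.exp (2 * Real.log n / ((n : ℝ) - 2)))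
      atTop (nhds 1) := by
    have := (Real.continuous_exp.tendsto 0).comp aux_log_lim
    simpa [Function.comp_def] using this
  have hmain : Tendsto R atTop (nhds 1) := by
    refine tendsto_of_tendsto_of_tendsto_of_le_of_le' tendsto_const_nhds hup ?_ ?_
    · filter_upwards [eventually_ge_atTop 3] with n hn
      exact (hR n hn).1.le
    · filter_upwards [eventually_ge_atTop 3] with n hn
      exact key n hn
  refine ⟨hmain, ?_⟩
  have := (hmain.sub (tendsto_const_nhds (x := (1 : ℝ)))).const_mul 2
  simpa using this
end

section
/- For each integer n ≥ 3, let B_n = (n-2)·R_1^(n-2)/(R_1^(n-2) - 1), where R_1 > 1 is the unique solution of R^(2n-2) - (n-1)R^n - (n-1)^2 R^(n-2) + (n-1) = 0. Then n-2 < B_n < n-1, and consequently B_n → ∞ as n → ∞. -/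
theorem stmt_7 (R : ℕ → ℝ)
    (hR : ∀ n : ℕ, 3 ≤ n → 1 < R n ∧
      (R n) ^ (2 * n - 2) - ((n : ℝ) - 1) * (R n) ^ n
        - ((n : ℝ) - 1) ^ 2 * (R n) ^ (n - 2) + ((n : ℝ) - 1) = 0) :
    (∀ n : ℕ, 3 ≤ n →
      (n : ℝ) - 2 < ((n : ℝ) - 2) * (R n) ^ (n - 2) / ((R n) ^ (n - 2) - 1) ∧
      ((n : ℝ) - 2) * (R n) ^ (n - 2) / ((R n) ^ (n - 2) - 1) < (n : ℝ) - 1) ∧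
    Filter.Tendsto
      (fun n : ℕ => ((n : ℝ) - 2) * (R n) ^ (n - 2) / ((R n) ^ (n - 2) - 1))
      Filter.atTop Filter.atTop := by
  have key : ∀ n : ℕ, 3 ≤ n → ((n : ℝ) - 1) < (R n) ^ (n - 2) := by
    intro n hn
    obtain ⟨h1, heq⟩ := hR n hn
    have hx : (1 : ℝ) < (R n) ^ (n - 2) := one_lt_pow₀ h1 (by omega)
    have hrn : (0 : ℝ) < (R n) ^ n := pow_pos (by linarith) n
    have hsplit : (R n) ^ (2 * n - 2) = (R n) ^ (n - 2) * (R n) ^ n := by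
      rw [← pow_add]; congr 1; omega
    have hn2 : (2 : ℝ) ≤ (n : ℝ) - 1 := by
      have : (3 : ℝ) ≤ (n : ℝ) := by exact_mod_cast hn
      linarith
    rw [hsplit] at heq
    by_contra h
    push_neg at h
    have h1' : (0 : ℝ) ≤ (R n) ^ n * (((n : ℝ) - 1) - (R n) ^ (n - 2)) :=
      mul_nonneg hrn.le (by linarith)
    have h2' : (0 : ℝ) < ((n : ℝ) - 1) * (((n : ℝ) - 1) * (R n) ^ (n - 2) - 1) := by
      nlinarith
    nlinarith
  have main : ∀ n : ℕ, 3 ≤ n →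
      (n : ℝ) - 2 < ((n : ℝ) - 2) * (R n) ^ (n - 2) / ((R n) ^ (n - 2) - 1) ∧
      ((n : ℝ) - 2) * (R n) ^ (n - 2) / ((R n) ^ (n - 2) - 1) < (n : ℝ) - 1 := by
    intro n hn
    obtain ⟨h1, _⟩ := hR n hn
    have hk := key n hn
    have hx : (1 : ℝ) < (R n) ^ (n - 2) := one_lt_pow₀ h1 (by omega)
    have hx0 : (0 : ℝ) < (R n) ^ (n - 2) - 1 := by linarith
    have hn2 : (1 : ℝ) ≤ (n : ℝ) - 2 := by
      have : (3 : ℝ) ≤ (n : ℝ) := by exact_mod_cast hn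
      linarith
    constructor
    · rw [lt_div_iff₀ hx0]; nlinarith
    · rw [div_lt_iff₀ hx0]; nlinarith
  refine ⟨main, ?_⟩
  have h2 : Filter.Tendsto (fun n : ℕ => (n : ℝ) - 2) Filter.atTop Filter.atTop := by
    simpa [sub_eq_add_neg] using
      Filter.tendsto_atTop_add_const_right Filter.atTop (-2 : ℝ) tendsto_natCast_atTop_atTop
  refine Filter.tendsto_atTop_mono' _ ?_ h2
  filter_upwards [Filter.eventually_ge_atTop 3] with n hn
  exact (main n hn).1.le
end

section
/- Fix an integer n ≥ 3 and reals B > n-2 and 0 < δ < (B - (n-2))/2 with B < n-1. Define R_δ = ((B-δ)/(B-(n-2)-δ))^(1/(n-2)) and R_* = (B/(B-(n-2)))^(1/(n-2)). Then R_δ - R_* ≤ C(n,B)·δ where C(n,B) = (2/(B-(n-2))^2) / (B/(B-(n-2)))^((n-3)/(n-2)). -/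
theorem stmt_8 (n : ℕ) (hn : 3 ≤ n) (B δ : ℝ)
    (hB1 : (n : ℝ) - 2 < B) (hB2 : B < (n : ℝ) - 1)
    (hδ0 : 0 < δ) (hδ : δ < (B - ((n : ℝ) - 2)) / 2) :
    ((B - δ) / (B - ((n : ℝ) - 2) - δ)) ^ ((1 : ℝ) / ((n : ℝ) - 2))
      - (B / (B - ((n : ℝ) - 2))) ^ ((1 : ℝ) / ((n : ℝ) - 2))
      ≤ (2 / (B - ((n : ℝ) - 2)) ^ 2)
          / (B / (B - ((n : ℝ) - 2))) ^ (((n : ℝ) - 3) / ((n : ℝ) - 2)) * δ := by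
  have hn3 : (3 : ℝ) ≤ (n : ℝ) := by exact_mod_cast hn
  set m : ℝ := (n : ℝ) - 2 with hmdef
  have hm1 : 1 ≤ m := by simp only [hmdef]; linarith
  have hm0 : (0 : ℝ) < m := by linarith
  set a : ℝ := B - m with hadef
  have ha0 : 0 < a := by simp only [hadef]; linarith
  have haδ : 0 < a - δ := by
    have : δ < a / 2 := hδ
    linarith
  have hB0 : 0 < B := by linarith
  have hBδ : 0 < B - δ := by
    have : δ < a / 2 := hδ
    simp only [hadef] at this
    linarith
  clear_value m a
  have hn3' : (n : ℝ) - 3 = m - 1 := by simp only [hmdef]; ring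
  rw [hn3']
  set X : ℝ := (B - δ) / (a - δ) with hXdef
  set Y : ℝ := B / a with hYdef
  have hX0 : 0 < X := div_pos hBδ haδ
  have hY0 : 0 < Y := div_pos hB0 ha0
  set x : ℝ := X ^ ((1:ℝ)/m) with hxdef
  set y : ℝ := Y ^ ((1:ℝ)/m) with hydef
  have hx0 : 0 < x := Real.rpow_pos_of_pos hX0 _
  have hy0 : 0 < y := Real.rpow_pos_of_pos hY0 _
  -- x^m = X, y^m = Y
  have hxm : x ^ m = X := by
    rw [hxdef, ← Real.rpow_mul hX0.le, one_div_mul_cancel hm0.ne', Real.rpow_one]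
  have hym : y ^ m = Y := by
    rw [hydef, ← Real.rpow_mul hY0.le, one_div_mul_cancel hm0.ne', Real.rpow_one]
  have hXY : Y ≤ X := by
    rw [hXdef, hYdef, div_le_div_iff₀ ha0 haδ]
    have : 0 < m := hm0
    nlinarith [mul_pos hδ0 hm0]
  have hxy : y ≤ x := by
    rw [hxdef, hydef]
    exact Real.rpow_le_rpow hY0.le hXY (by positivity)
  clear_value x y X Y
  -- Bernoulli inequality with s = x/y - 1
  have hber : 1 + m * (x / y - 1) ≤ X / Y := by
    have hs : (-1 : ℝ) ≤ x / y - 1 := by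
      have : 0 < x / y := div_pos hx0 hy0
      linarith
    have := one_add_mul_self_le_rpow_one_add hs hm1
    have heq : (1 + (x / y - 1)) ^ m = X / Y := by
      have : 1 + (x / y - 1) = x / y := by ring
      rw [this, Real.div_rpow hx0.le hy0.le, hxm, hym]
    linarith [heq ▸ this]
  -- deduce x - y ≤ (X - Y) * y / (m * Y)
  have hkey : x - y ≤ (X - Y) * y / (m * Y) := by
    rw [le_div_iff₀ (by positivity)]
    have h1 : m * (x / y - 1) * y ≤ (X / Y - 1) * y := by
      have := hber
      nlinarith [hy0]
    have h2 : m * (x / y - 1) * y = m * (x - y) := by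
      field_simp
    have h3 : (X / Y - 1) * y = (X - Y) / Y * y := by
      field_simp
    have h4 : m * (x - y) ≤ (X - Y) / Y * y := by rw [← h2, ← h3]; exact h1
    have h5 : (X - Y) / Y * y * Y = (X - Y) * y := by field_simp
    calc (x - y) * (m * Y) = m * (x - y) * Y := by ring
      _ ≤ (X - Y) / Y * y * Y := mul_le_mul_of_nonneg_right h4 hY0.le
      _ = (X - Y) * y := h5
  -- bound X - Y
  have hXmY : X - Y ≤ 2 * m * δ / a ^ 2 := by
    have heq : X - Y = δ * m / ((a - δ) * a) := by
      rw [hXdef, hYdef]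
      field_simp
      rw [hadef]
      ring
    rw [heq, div_le_div_iff₀ (by positivity) (by positivity)]
    have hδa : 2 * δ ≤ a := by
      have : δ < a / 2 := hδ
      linarith
    nlinarith [mul_le_mul_of_nonneg_left hδa (by positivity : (0:ℝ) ≤ δ * m * a)]
  -- RHS rewrite: Y^((m-1)/m) = Y / y
  have hYexp : Y ^ ((m - 1) / m) = Y / y := by
    have : (m - 1) / m = 1 - 1 / m := by field_simp
    rw [this, Real.rpow_sub hY0, Real.rpow_one, hydef]
  rw [hYexp]
  have hfinal : (X - Y) * y / (m * Y) ≤ 2 / a ^ 2 / (Y / y) * δ := by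
    have hrhs : 2 / a ^ 2 / (Y / y) * δ = (2 * m * δ / a ^ 2) * y / (m * Y) := by
      field_simp
    rw [hrhs]
    gcongr
  linarith [hkey, hfinal]
end

section
/- For integers n ≥ 3 and i ≥ 0, the function R ↦ σ_D(i,R) = ((i+n-2)R^(2i+n-2) + i)/(R^(2i+n-2) - 1) on (1,∞) has derivative with respect to L (where R = 1+L/2) equal to -4(L+2)(2i+n-2)^2(1+L/2)^(2i+n) / (4(1+L/2)^(2i+n) - L^2 - 4L - 4)^2, which is strictly negative for L > 0. -/
theorem stmt_11 (n i : ℕ) (hn : 3 ≤ n) (L : ℝ) (hL : 0 < L) :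
    HasDerivAt (fun L : ℝ =>
      (((i : ℝ) + n - 2) * (1 + L / 2) ^ (2 * i + n - 2) + i) /
        ((1 + L / 2) ^ (2 * i + n - 2) - 1))
      (-4 * (L + 2) * ((2 * i : ℝ) + n - 2) ^ 2 * (1 + L / 2) ^ (2 * i + n) /
        (4 * (1 + L / 2) ^ (2 * i + n) - L ^ 2 - 4 * L - 4) ^ 2) L ∧
    -4 * (L + 2) * ((2 * i : ℝ) + n - 2) ^ 2 * (1 + L / 2) ^ (2 * i + n) /
        (4 * (1 + L / 2) ^ (2 * i + n) - L ^ 2 - 4 * L - 4) ^ 2 < 0 := by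
  obtain ⟨n', rfl⟩ : ∃ n', n = n' + 3 := ⟨n - 3, by omega⟩
  set k := 2 * i + n' with hk
  have e1 : 2 * i + (n' + 3) - 2 = k + 1 := by omega
  have e2 : 2 * i + (n' + 3) = k + 3 := by omega
  rw [e1, e2]
  have hR1 : (1:ℝ) < 1 + L / 2 := by linarith
  have hR0 : (0:ℝ) < 1 + L / 2 := by linarith
  have hpow : (1:ℝ) < (1 + L / 2) ^ (k + 1) := one_lt_pow₀ hR1 (by omega)
  have hdne : (1 + L / 2) ^ (k + 1) - 1 ≠ 0 := ne_of_gt (by linarith)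
  have hkc : (k : ℝ) = 2 * (i : ℝ) + n' := by rw [hk]; push_cast; ring
  have hdenpos : (0:ℝ) < 4 * (1 + L / 2) ^ (k + 3) - L ^ 2 - 4 * L - 4 := by
    have h1 : 4 * (1 + L / 2) ^ (k + 3) - L ^ 2 - 4 * L - 4
        = (L ^ 2 + 4 * L + 4) * ((1 + L / 2) ^ (k + 1) - 1) := by ring
    rw [h1]
    have h2 : (0:ℝ) < L ^ 2 + 4 * L + 4 := by positivity
    nlinarith
  have hRd : HasDerivAt (fun L : ℝ => 1 + L / 2) (1 / 2) L := by
    simpa using ((hasDerivAt_id L).div_const 2).const_add 1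
  have hud : HasDerivAt (fun L : ℝ => (1 + L / 2) ^ (k + 1))
      ((k + 1 : ℝ) * (1 + L / 2) ^ k * (1 / 2)) L := by
    simpa using hRd.fun_pow (k + 1)
  have hnum : HasDerivAt (fun L : ℝ => ((i : ℝ) + ((n' : ℝ) + 3) - 2) * (1 + L / 2) ^ (k + 1) + i)
      (((i : ℝ) + ((n' : ℝ) + 3) - 2) * ((k + 1 : ℝ) * (1 + L / 2) ^ k * (1 / 2))) L :=
    (hud.const_mul _).add_const _
  have hden : HasDerivAt (fun L : ℝ => (1 + L / 2) ^ (k + 1) - 1)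
      ((k + 1 : ℝ) * (1 + L / 2) ^ k * (1 / 2)) L := hud.sub_const 1
  have hd := hnum.div hden hdne
  have heq : -4 * (L + 2) * (2 * (i : ℝ) + ((n' : ℝ) + 3) - 2) ^ 2 * (1 + L / 2) ^ (k + 3) /
        (4 * (1 + L / 2) ^ (k + 3) - L ^ 2 - 4 * L - 4) ^ 2
      = (((i : ℝ) + ((n' : ℝ) + 3) - 2) * ((k + 1 : ℝ) * (1 + L / 2) ^ k * (1 / 2)) *
            ((1 + L / 2) ^ (k + 1) - 1) -
          (((i : ℝ) + ((n' : ℝ) + 3) - 2) * (1 + L / 2) ^ (k + 1) + i) *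
            ((k + 1 : ℝ) * (1 + L / 2) ^ k * (1 / 2))) /
        ((1 + L / 2) ^ (k + 1) - 1) ^ 2 := by
    rw [hkc, div_eq_div_iff (by positivity) (by positivity)]
    ring
  constructor
  · have : HasDerivAt (fun L : ℝ =>
        (((i : ℝ) + ((n' : ℝ) + 3) - 2) * (1 + L / 2) ^ (k + 1) + i) /
          ((1 + L / 2) ^ (k + 1) - 1))
        (-4 * (L + 2) * (2 * (i : ℝ) + ((n' : ℝ) + 3) - 2) ^ 2 * (1 + L / 2) ^ (k + 3) /
          (4 * (1 + L / 2) ^ (k + 3) - L ^ 2 - 4 * L - 4) ^ 2) L := by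
      rw [heq]; exact hd
    convert this using 2 <;> push_cast <;> ring
  · have hnumneg : -4 * (L + 2) * ((2 * i : ℝ) + ((n' : ℝ) + 3) - 2) ^ 2 *
        (1 + L / 2) ^ (k + 3) < 0 := by
      have h1 : (0:ℝ) < (1 + L / 2) ^ (k + 3) := by positivity
      have h2 : (0:ℝ) < ((2 * i : ℝ) + ((n' : ℝ) + 3) - 2) := by
        have : (0:ℝ) ≤ (2 * i : ℝ) := by positivity
        have : (0:ℝ) ≤ (n' : ℝ) := by positivity
        linarith
      have h2' := pow_pos h2 2
      have h4 : (0:ℝ) < 4 * (L + 2) := by linarith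
      nlinarith [mul_pos (mul_pos h4 h2') h1]
    have h3 : -4 * (L + 2) * ((2 * i : ℝ) + (((n' : ℕ) + 3 : ℕ) : ℝ) - 2) ^ 2 *
        (1 + L / 2) ^ (k + 3) < 0 := by push_cast; push_cast at hnumneg; exact hnumneg
    exact div_neg_of_neg_of_pos h3 (by positivity)
end

section
/- Fix integers n ≥ 3 and i ≥ 1. The equation σ_D(i,R) = σ_N(i+1,R), i.e. ((i+n-2)R^(2i+n-2)+i)/(R^(2i+n-2)-1) = (i+1)(i+n-1)(R^(2i+n)-1)/((i+1)R^(2i+n)+i+n-1), has a unique solution R_i in (1,∞), and it is equivalent to (i+1)·R^(2i+n-2)·(R^(2i+n) - (2i+n-1)R^2 - (i+n-1)(2i+n-1)/(i+1)) + (i+n-1) = 0. -/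
noncomputable def sD (p q : ℝ) (m : ℕ) (R : ℝ) : ℝ := ((p+q-2)*R^m + p)/(R^m - 1)
noncomputable def sN (p q : ℝ) (m : ℕ) (R : ℝ) : ℝ :=
  (p+1)*(p+q-1)*(R^(m+2)-1)/((p+1)*R^(m+2)+p+q-1)

lemma denom1_pos {m : ℕ} (hm : m ≠ 0) {R : ℝ} (hR : 1 < R) : 0 < R ^ m - 1 := by
  have := one_lt_pow₀ hR hm
  linarith

lemma denom2_pos {p q : ℝ} (hp : 1 ≤ p) (hq : 3 ≤ q) {m : ℕ} {R : ℝ} (hR : 0 < R) :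
    0 < (p+1)*R^(m+2)+p+q-1 := by
  have h : 0 < R ^ (m+2) := pow_pos hR _
  nlinarith

lemma aux_iff {p q : ℝ} (hp : 1 ≤ p) (hq : 3 ≤ q) {m : ℕ} (hm : m ≠ 0) {R : ℝ} (hR : 1 < R) :
    sD p q m R = sN p q m R ↔
      (p+1)*R^m*(R^(m+2) - (2*p+q-1)*R^2 - (p+q-1)*(2*p+q-1)/(p+1)) + (p+q-1) = 0 := by
  have h1 := denom1_pos hm hR
  have h2 := denom2_pos hp hq (m := m) (lt_trans one_pos hR)
  have hp1 : p + 1 ≠ 0 := by linarith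
  have key : (p+1)*R^m*(R^(m+2) - (2*p+q-1)*R^2 - (p+q-1)*(2*p+q-1)/(p+1)) + (p+q-1)
      = (p+1)*(p+q-1)*(R^(m+2)-1) * (R^m - 1) - ((p+q-2)*R^m + p) * ((p+1)*R^(m+2)+p+q-1) := by
    field_simp
    ring
  rw [sD, sN, div_eq_div_iff h1.ne' h2.ne', key, sub_eq_zero, eq_comm]

lemma sD_anti {p q : ℝ} (hp : 1 ≤ p) (hq : 3 ≤ q) {m : ℕ} (hm : m ≠ 0) {r s : ℝ}
    (hr : 1 < r) (hrs : r < s) : sD p q m s < sD p q m r := by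
  have h1 := denom1_pos hm hr
  have h2 := denom1_pos hm (hr.trans hrs)
  have hx : r ^ m < s ^ m := pow_lt_pow_left₀ hrs (by linarith) hm
  rw [sD, sD, div_lt_div_iff₀ h2 h1]
  nlinarith

lemma sN_mono {p q : ℝ} (hp : 1 ≤ p) (hq : 3 ≤ q) {m : ℕ} {r s : ℝ}
    (hr : 1 < r) (hrs : r < s) : sN p q m r < sN p q m s := by
  have h1 := denom2_pos hp hq (m := m) (show (0:ℝ) < r by linarith)
  have h2 := denom2_pos hp hq (m := m) (show (0:ℝ) < s by linarith)
  have hy : r ^ (m+2) < s ^ (m+2) := pow_lt_pow_left₀ hrs (by linarith) (by omega)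
  rw [sN, sN, div_lt_div_iff₀ h1 h2]
  nlinarith [mul_pos (mul_pos (show (0:ℝ) < p+1 by linarith) (show (0:ℝ) < p+q-1 by linarith))
    (mul_pos (show (0:ℝ) < 2*p+q by linarith) (sub_pos.2 hy))]

lemma G_strictMono {p q : ℝ} (hp : 1 ≤ p) (hq : 3 ≤ q) {m : ℕ} (hm : m ≠ 0) :
    StrictMonoOn (fun R => sN p q m R - sD p q m R) (Set.Ioi 1) := by
  intro r hr s hs hrs
  have := sD_anti hp hq hm hr hrs
  have := sN_mono hp hq (m := m) hr hrs
  simp only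
  linarith

lemma G_neg {p q : ℝ} (hp : 1 ≤ p) (hq : 3 ≤ q) {m : ℕ} {a : ℝ} (ha : 1 < a)
    (ham : a ^ m = 2) : sN p q m a - sD p q m a < 0 := by
  have h2 := denom2_pos hp hq (m := m) (show (0:ℝ) < a by linarith)
  have hsD : sD p q m a = 2*(p+q-2) + p := by
    rw [sD, ham]; norm_num; ring
  have hsN : sN p q m a < p+q-1 := by
    rw [sN, div_lt_iff₀ h2]
    have hy : (0:ℝ) < a ^ (m+2) := pow_pos (by linarith) _
    nlinarith
  rw [hsD]
  nlinarith

lemma G_pos {p q : ℝ} (hp : 1 ≤ p) (hq : 3 ≤ q) {m : ℕ} (hm : m ≠ 0) {b : ℝ}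
    (hb : 3*(2*p+q-2) + 3*(p+q-1)*(2*p+q) + 2 ≤ b) :
    0 < sN p q m b - sD p q m b := by
  have hb1 : (1:ℝ) < b := by nlinarith
  have hb0 : (0:ℝ) < b := by linarith
  have h1 := denom1_pos hm hb1
  have h2 := denom2_pos hp hq (m := m) hb0
  have hx : b ≤ b ^ m := le_self_pow₀ hb1.le hm
  have hy : b ≤ b ^ (m+2) := le_self_pow₀ hb1.le (by omega)
  have hD : sD p q m b < (p+q-2) + 1/3 := by
    rw [sD, div_lt_iff₀ h1]
    nlinarith
  have hN : (p+q-1) - 1/3 < sN p q m b := by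
    rw [sN, lt_div_iff₀ h2]
    nlinarith
  linarith

lemma exists_unique_root {p q : ℝ} (hp : 1 ≤ p) (hq : 3 ≤ q) {m : ℕ} (hm : m ≠ 0) :
    ∃! R : ℝ, 1 < R ∧ sD p q m R = sN p q m R := by
  set a : ℝ := (2:ℝ) ^ ((m:ℝ)⁻¹) with ha_def
  have ha1 : 1 < a := by
    rw [ha_def]
    exact (Real.one_lt_rpow_iff_of_pos (by norm_num)).mpr
      (Or.inl ⟨one_lt_two, by positivity⟩)
  have ham : a ^ m = 2 := Real.rpow_inv_natCast_pow (by norm_num) hm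
  set b : ℝ := max a (3*(2*p+q-2) + 3*(p+q-1)*(2*p+q) + 2) with hb_def
  have hab : a ≤ b := le_max_left _ _
  have hGa : sN p q m a - sD p q m a < 0 := G_neg hp hq ha1 ham
  have hGb : 0 < sN p q m b - sD p q m b := G_pos hp hq hm (le_max_right _ _)
  have contG : ContinuousOn (fun R => sN p q m R - sD p q m R) (Set.Icc a b) := by
    apply ContinuousOn.sub
    · apply ContinuousOn.div (by fun_prop) (by fun_prop)
      intro x hx
      exact (denom2_pos hp hq (lt_trans one_pos (lt_of_lt_of_le ha1 hx.1))).ne'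
    · apply ContinuousOn.div (by fun_prop) (by fun_prop)
      exact fun x hx => (denom1_pos hm (lt_of_lt_of_le ha1 hx.1)).ne'
  have h0 : (0:ℝ) ∈ Set.Ioo (sN p q m a - sD p q m a) (sN p q m b - sD p q m b) := ⟨hGa, hGb⟩
  obtain ⟨c, hc, hGc⟩ := intermediate_value_Ioo hab contG h0
  have hc1 : 1 < c := lt_trans ha1 hc.1
  refine ⟨c, ⟨hc1, (sub_eq_zero.mp hGc).symm⟩, ?_⟩
  rintro r ⟨hr1, hreq⟩
  apply (G_strictMono hp hq hm).injOn (Set.mem_Ioi.mpr hr1) (Set.mem_Ioi.mpr hc1)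
  simp only [hGc, sub_eq_zero, hreq.symm]

theorem stmt_12 (n i : ℕ) (hn : 3 ≤ n) (hi : 1 ≤ i) :
    (∃! R : ℝ, 1 < R ∧
      (((i : ℝ) + n - 2) * R ^ (2 * i + n - 2) + i) / (R ^ (2 * i + n - 2) - 1) =
        ((i : ℝ) + 1) * ((i : ℝ) + n - 1) * (R ^ (2 * i + n) - 1) /
          (((i : ℝ) + 1) * R ^ (2 * i + n) + i + n - 1)) ∧
    (∀ R : ℝ, 1 < R →
      ((((i : ℝ) + n - 2) * R ^ (2 * i + n - 2) + i) / (R ^ (2 * i + n - 2) - 1) =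
        ((i : ℝ) + 1) * ((i : ℝ) + n - 1) * (R ^ (2 * i + n) - 1) /
          (((i : ℝ) + 1) * R ^ (2 * i + n) + i + n - 1) ↔
       ((i : ℝ) + 1) * R ^ (2 * i + n - 2) *
          (R ^ (2 * i + n) - ((2 * i : ℝ) + n - 1) * R ^ 2
            - ((i : ℝ) + n - 1) * ((2 * i : ℝ) + n - 1) / ((i : ℝ) + 1))
          + ((i : ℝ) + n - 1) = 0)) := by
  obtain ⟨m, hm⟩ : ∃ m, 2*i+n-2 = m := ⟨_, rfl⟩
  have hm2 : 2*i+n = m+2 := by omega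
  have hm0 : m ≠ 0 := by omega
  have hp : (1:ℝ) ≤ (i:ℝ) := by exact_mod_cast hi
  have hq : (3:ℝ) ≤ (n:ℝ) := by exact_mod_cast hn
  rw [hm, hm2]
  constructor
  · exact exists_unique_root hp hq hm0
  · intro R hR
    exact aux_iff hp hq hm0 hR
end

section
/- Fix an integer n ≥ 3. If R > 1 satisfies R^(2i+n) < (2i+n-1)R^2 + (i+n-1)(2i+n-1)/(i+1) for an integer i ≥ 1, then R < exp(2·log(2i+n)/(2i+n-2)). -/
theorem stmt_13 (n i : ℕ) (hn : 3 ≤ n) (hi : 1 ≤ i) (R : ℝ) (hR : 1 < R)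
    (h : R ^ (2 * i + n) <
      ((2 * i : ℝ) + n - 1) * R ^ 2
        + ((i : ℝ) + n - 1) * ((2 * i : ℝ) + n - 1) / ((i : ℝ) + 1)) :
    R < Real.exp (2 * Real.log ((2 * i : ℝ) + n) / ((2 * i : ℝ) + n - 2)) := by
  have hi' : (1 : ℝ) ≤ (i : ℝ) := by exact_mod_cast hi
  have hn' : (3 : ℝ) ≤ (n : ℝ) := by exact_mod_cast hn
  have hR0 : (0 : ℝ) < R := by linarith
  have hR2 : (1 : ℝ) < R ^ 2 := by nlinarith
  set a : ℝ := (2 * i : ℝ) + n with ha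
  have ha5 : (5 : ℝ) ≤ a := by
    have : (1 : ℝ) ≤ (i : ℝ) := hi'
    push_cast [ha]; linarith
  have key : ((i : ℝ) + n - 1) * ((2 * i : ℝ) + n - 1) / ((i : ℝ) + 1)
      < a ^ 2 - (a - 1) := by
    rw [div_lt_iff₀ (by linarith : (0 : ℝ) < (i : ℝ) + 1)]
    push_cast [ha]
    nlinarith [sq_nonneg ((i : ℝ) + (n : ℝ)), hi', hn']
  have h1 : R ^ (2 * i + n) < a ^ 2 * R ^ 2 := by
    have hpos : (0 : ℝ) ≤ a ^ 2 - (a - 1) := by nlinarith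
    nlinarith [mul_nonneg hpos (le_of_lt (by linarith : (0:ℝ) < R ^ 2 - 1))]
  have hk : 2 * i + n = (2 * i + n - 2) + 2 := by omega
  have h2 : R ^ (2 * i + n - 2) < a ^ 2 := by
    have := h1
    rw [hk, pow_add] at this
    have h2pos : (0 : ℝ) < R ^ 2 := by positivity
    exact lt_of_mul_lt_mul_right this (le_of_lt h2pos) |>.trans_le (le_refl _)
  have hlogR : 0 < Real.log R := Real.log_pos hR
  have ha0 : (0 : ℝ) < a := by linarith
  have h3 : ((2 * i + n - 2 : ℕ) : ℝ) * Real.log R < 2 * Real.log a := by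
    have hl := Real.log_lt_log (by positivity) h2
    rw [Real.log_pow, Real.log_pow] at hl
    exact_mod_cast hl
  have hcast : ((2 * i + n - 2 : ℕ) : ℝ) = a - 2 := by
    have : 2 ≤ 2 * i + n := by omega
    push_cast [ha, Nat.cast_sub this]
    ring
  rw [hcast] at h3
  have ha2 : (0 : ℝ) < a - 2 := by linarith
  have h4 : Real.log R < 2 * Real.log a / (a - 2) := by
    rw [lt_div_iff₀ ha2]
    linarith [h3]
  calc R = Real.exp (Real.log R) := (Real.exp_log hR0).symm
    _ < _ := Real.exp_lt_exp.mpr h4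
end

section
/- Fix an integer n ≥ 3. For each integer i ≥ 1, let R_i be the unique solution in (1,∞) of (i+1)R^(2i+n-2)(R^(2i+n) - (2i+n-1)R^2 - (i+n-1)(2i+n-1)/(i+1)) + (i+n-1) = 0. Then R_i → 1 as i → ∞, and so the lengths L_i* = 2(R_i - 1) tend to 0. -/
open Real Filter

private theorem stmt_14_key (n : ℕ) (hn : 3 ≤ n) (R : ℕ → ℝ)
    (hR : ∀ i : ℕ, 1 ≤ i → 1 < R i ∧
      ((i : ℝ) + 1) * (R i) ^ (2 * i + n - 2) *
          ((R i) ^ (2 * i + n) - ((2 * i : ℝ) + n - 1) * (R i) ^ 2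
            - ((i : ℝ) + n - 1) * ((2 * i : ℝ) + n - 1) / ((i : ℝ) + 1))
          + ((i : ℝ) + n - 1) = 0) (i : ℕ) (hi : 1 ≤ i) :
    R i ≤ Real.exp (Real.log (((n:ℝ)+1) * (2*(i:ℝ)+n)) / (2*(i:ℝ)+n-2)) := by
  obtain ⟨hR1, heq⟩ := hR i hi
  have hi1 : (1:ℝ) ≤ i := by exact_mod_cast hi
  have hn3 : (3:ℝ) ≤ n := by exact_mod_cast hn
  have hRpos : 0 < R i := by linarith
  have hXpos : 0 < R i ^ (2*i+n-2) := pow_pos hRpos _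
  have hPpos : 0 < ((i:ℝ)+1) * R i ^ (2*i+n-2) := by positivity
  have hC : (0:ℝ) < (i:ℝ)+n-1 := by linarith
  have hA : (0:ℝ) < (2*(i:ℝ)+n-1) := by linarith
  have hbr : (R i) ^ (2 * i + n) - ((2 * i : ℝ) + n - 1) * (R i) ^ 2
      - ((i : ℝ) + n - 1) * ((2 * i : ℝ) + n - 1) / ((i : ℝ) + 1) < 0 := by
    by_contra h
    push_neg at h
    nlinarith [mul_nonneg hPpos.le h]
  have hsplit : R i ^ (2*i+n) = R i ^ (2*i+n-2) * R i ^ 2 := by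
    rw [← pow_add]; congr 1; omega
  have hK : ((i : ℝ) + n - 1) * ((2 * i : ℝ) + n - 1) / ((i : ℝ) + 1)
      ≤ (n:ℝ) * (2*(i:ℝ)+n-1) := by
    rw [div_le_iff₀ (by linarith)]
    nlinarith [mul_le_mul_of_nonneg_right (show ((i:ℝ)+n-1) ≤ (n:ℝ)*((i:ℝ)+1) by nlinarith) hA.le]
  have hr2 : (1:ℝ) ≤ R i ^ 2 := by nlinarith
  have hX : R i ^ (2*i+n-2) ≤ ((n:ℝ)+1) * (2*(i:ℝ)+n) := by
    rw [hsplit] at hbr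
    have hint : (n:ℝ)*(2*(i:ℝ)+n-1) ≤ (n:ℝ)*(2*(i:ℝ)+n-1) * R i ^ 2 := by
      nlinarith [mul_le_mul_of_nonneg_left hr2 (show (0:ℝ) ≤ (n:ℝ)*(2*(i:ℝ)+n-1) by nlinarith)]
    have h1 : R i ^ (2*i+n-2) * R i ^ 2 < (((n:ℝ)+1)*(2*(i:ℝ)+n-1)) * R i ^ 2 := by nlinarith
    have h2 : R i ^ (2*i+n-2) < ((n:ℝ)+1)*(2*(i:ℝ)+n-1) :=
      lt_of_mul_lt_mul_right h1 (by positivity : (0:ℝ) ≤ R i ^ 2)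
    have h3 : ((n:ℝ)+1)*(2*(i:ℝ)+n-1) ≤ ((n:ℝ)+1)*(2*(i:ℝ)+n) :=
      mul_le_mul_of_nonneg_left (by linarith) (by linarith)
    linarith
  have hd : (0:ℝ) < 2*(i:ℝ)+n-2 := by linarith
  have hdn : ((2*i+n-2 : ℕ) : ℝ) = 2*(i:ℝ)+n-2 := by
    have : 2 ≤ 2*i+n := by omega
    push_cast [Nat.cast_sub this]
    ring
  have hlog : (2*(i:ℝ)+n-2) * Real.log (R i) ≤ Real.log (((n:ℝ)+1) * (2*(i:ℝ)+n)) := by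
    have := Real.log_le_log hXpos hX
    rwa [Real.log_pow, hdn] at this
  have hlogR : Real.log (R i) ≤ Real.log (((n:ℝ)+1) * (2*(i:ℝ)+n)) / (2*(i:ℝ)+n-2) := by
    rw [le_div_iff₀ hd]; linarith
  calc R i = Real.exp (Real.log (R i)) := (Real.exp_log hRpos).symm
    _ ≤ _ := Real.exp_le_exp.mpr hlogR

private theorem stmt_14_lim (n : ℕ) (hn : 3 ≤ n) :
    Tendsto (fun i : ℕ => Real.exp (Real.log (((n:ℝ)+1) * (2*(i:ℝ)+n)) / (2*(i:ℝ)+n-2)))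
      atTop (nhds 1) := by
  have hn3 : (3:ℝ) ≤ n := by exact_mod_cast hn
  have hu : Tendsto (fun i : ℕ => 2*(i:ℝ)+n) atTop atTop := by
    apply tendsto_atTop_add_const_right
    exact (tendsto_natCast_atTop_atTop (R := ℝ)).const_mul_atTop (by norm_num)
  have hd : Tendsto (fun i : ℕ => 2*(i:ℝ)+n-2) atTop atTop := by
    simp only [sub_eq_add_neg]
    exact tendsto_atTop_add_const_right _ _ hu
  have t1 : Tendsto (fun i : ℕ => Real.log ((n:ℝ)+1) / (2*(i:ℝ)+n-2)) atTop (nhds 0) :=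
    tendsto_const_nhds.div_atTop hd
  have base : Tendsto (fun x : ℝ => Real.log x ^ 1 / (1 * x + (-2))) atTop (nhds 0) :=
    Real.tendsto_pow_log_div_mul_add_atTop 1 (-2) 1 one_ne_zero
  have t2 : Tendsto (fun i : ℕ => Real.log (2*(i:ℝ)+n) / (2*(i:ℝ)+n-2)) atTop (nhds 0) := by
    have := base.comp hu
    simpa [Function.comp_def, pow_one, sub_eq_add_neg] using this
  have tsum : Tendsto (fun i : ℕ => Real.log (((n:ℝ)+1) * (2*(i:ℝ)+n)) / (2*(i:ℝ)+n-2))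
      atTop (nhds 0) := by
    have h0 : (0:ℝ) + 0 = 0 := by norm_num
    refine Tendsto.congr (fun i => ?_) (h0 ▸ t1.add t2)
    rw [← add_div, ← Real.log_mul (by linarith) (by positivity)]
  have := (Real.continuous_exp.tendsto 0).comp tsum
  simpa [Function.comp_def] using this

theorem stmt_14 (n : ℕ) (hn : 3 ≤ n) (R : ℕ → ℝ)
    (hR : ∀ i : ℕ, 1 ≤ i → 1 < R i ∧
      ((i : ℝ) + 1) * (R i) ^ (2 * i + n - 2) *
          ((R i) ^ (2 * i + n) - ((2 * i : ℝ) + n - 1) * (R i) ^ 2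
            - ((i : ℝ) + n - 1) * ((2 * i : ℝ) + n - 1) / ((i : ℝ) + 1))
          + ((i : ℝ) + n - 1) = 0) :
    Filter.Tendsto R Filter.atTop (nhds 1) ∧
      Filter.Tendsto (fun i => 2 * (R i - 1)) Filter.atTop (nhds 0) := by
  have hmain : Filter.Tendsto R Filter.atTop (nhds 1) := by
    refine tendsto_of_tendsto_of_tendsto_of_le_of_le' tendsto_const_nhds
      (stmt_14_lim n hn) ?_ ?_
    · filter_upwards [eventually_ge_atTop 1] with i hi
      exact (hR i hi).1.le
    · filter_upwards [eventually_ge_atTop 1] with i hi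
      exact stmt_14_key n hn R hR i hi
  refine ⟨hmain, ?_⟩
  have := ((hmain.sub_const 1).const_mul 2)
  simpa using this
end

section
/- For each integer n ≥ 3 and real R > 1, we have σ_N(1,R) < σ_N(2,R), where σ_N(k,R) = k(k+n-2)(R^(2k+n-2)-1)/(kR^(2k+n-2)+k+n-2). -/
theorem stmt_18 (n : ℕ) (hn : 3 ≤ n) (R : ℝ) (hR : 1 < R) :
    ((n : ℝ) - 1) * (R ^ n - 1) / (R ^ n + n - 1) <
      2 * (n : ℝ) * (R ^ (n + 2) - 1) / (2 * R ^ (n + 2) + n) := by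
  have hm : (3 : ℝ) ≤ (n : ℝ) := by exact_mod_cast hn
  have ha : 1 < R ^ n := one_lt_pow₀ hR (by omega)
  have hb1 : 1 < R ^ (n + 2) := one_lt_pow₀ hR (by omega)
  have hR2 : 1 < R ^ 2 := one_lt_pow₀ hR (by norm_num)
  have hab : R ^ n < R ^ (n + 2) := by
    have : R ^ (n + 2) = R ^ n * R ^ 2 := by ring
    nlinarith
  have hd1 : (0 : ℝ) < R ^ n + n - 1 := by linarith
  have hd2 : (0 : ℝ) < 2 * R ^ (n + 2) + n := by linarith
  rw [div_lt_div_iff₀ hd1 hd2]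
  set a := R ^ n
  set b := R ^ (n + 2)
  nlinarith [mul_pos (sub_pos.2 hab) (by nlinarith : (0:ℝ) < 2*a + 2*((n:ℝ)^2 - 1)),
    mul_nonneg (le_of_lt (sub_pos.2 ha)) (by nlinarith : (0:ℝ) ≤ 2*a + (n:ℝ)^2 - (n:ℝ))]
end
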